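/- Let κ be an uncountable cardinal. Let X be the disjoint union of κ and ω topologized by the base {V ∪ U : V ∈ 𝒱, U ∈ 𝒰}, where 𝒱 is an ultrafilter on κ extending the filter of co-<κ sets and 𝒰 is a free ultrafilter on ω. Then X is a T₁ space in which every dense subset of cardinality < κ is separable. -/

import Mathlib

open Cardinal Set TopologicalSpace

universe u

/-- The density of a topological space: least cardinality of a dense subset. -/
noncomputable def densityCard (X : Type u) [TopologicalSpace X] : Cardinal.{u} :=
  sInf {c | ∃ D : Set X, Dense D ∧ #D = c}

/-- δ(X): the supremum of the densities of dense subspaces of `X`. -/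
noncomputable def deltaCard (X : Type u) [TopologicalSpace X] : Cardinal.{u} :=
  ⨆ D : {D : Set X // Dense D}, densityCard ↥(D.1)

/-- A π-base: a family of nonempty open sets such that every nonempty open set
contains a member of the family. -/
def IsPiBase {X : Type u} [TopologicalSpace X] (B : Set (Set X)) : Prop :=
  (∀ U ∈ B, IsOpen U ∧ U.Nonempty) ∧
  ∀ U : Set X, IsOpen U → U.Nonempty → ∃ V ∈ B, V ⊆ U

/-- The π-weight: least cardinality of a π-base. -/
noncomputable def piWeight (X : Type u) [TopologicalSpace X] : Cardinal.{u} :=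
  sInf {c | ∃ B : Set (Set X), IsPiBase B ∧ #B = c}

/-- The weight: least cardinality of a base of the topology. -/
noncomputable def weightCard (X : Type u) [TopologicalSpace X] : Cardinal.{u} :=
  sInf {c | ∃ B : Set (Set X), IsTopologicalBasis B ∧ #B = c}

/-- The set of points played by Player II before stage `β`. -/
def PlayedSet {X : Type u} (x : Ordinal.{u} → X) (β : Ordinal.{u}) : Set X :=
  {p | ∃ α < β, x α = p}

/-- Player I has a winning strategy in the open-point game `G_{X,θ}`:
there is a strategy `U` assigning to each history of points played by Player II a
nonempty open set (at positions where the played points are not yet dense), depending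
only on the initial segment of the history, such that in every run in which Player II
plays legally, the set of played points becomes dense at some stage `β < θ`. -/
def PlayerIWins (X : Type u) [TopologicalSpace X] (θ : Ordinal.{u}) : Prop :=
  ∃ U : (Ordinal.{u} → X) → Ordinal.{u} → Set X,
    (∀ x β, ¬ Dense (PlayedSet x β) → IsOpen (U x β) ∧ (U x β).Nonempty) ∧
    (∀ x y β, (∀ α < β, x α = y α) → U x β = U y β) ∧
    ∀ x : Ordinal.{u} → X, (∀ β < θ, ¬ Dense (PlayedSet x β) → x β ∈ U x β) →
      ∃ β < θ, Dense (PlayedSet x β)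

/-- gd(X): the least infinite cardinal κ such that Player I has a winning strategy
in the open-point game `G_{X,κ⁺}`. -/
noncomputable def gd (X : Type u) [TopologicalSpace X] : Cardinal.{u} :=
  sInf {κ | ℵ₀ ≤ κ ∧ PlayerIWins X (Order.succ κ).ord}

/-- With `X = κ ⊔ ω` topologized by the base `{V ∪ U : V ∈ 𝒱, U ∈ 𝒰}`,
where `𝒱` is an ultrafilter on `κ` extending the co-`<κ` filter and `𝒰` a free
ultrafilter on `ω`, the space `X` is `T₁` and every dense subset of cardinality `< κ`
contains a countable subset dense in `X` (in particular it is separable). -/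
theorem stmt9 (κ : Cardinal.{u}) (hκ : ℵ₀ < κ)
    (𝒱 : Ultrafilter κ.ord.ToType)
    (h𝒱 : ∀ s : Set κ.ord.ToType, #↥(sᶜ) < κ → s ∈ 𝒱)
    (𝒰 : Ultrafilter ℕ) (h𝒰 : (𝒰 : Filter ℕ) ≤ Filter.cofinite)
    [t : TopologicalSpace (κ.ord.ToType ⊕ ℕ)]
    (ht : t = TopologicalSpace.generateFrom
      {s | ∃ V ∈ 𝒱, ∃ U ∈ 𝒰, s = Sum.inl '' V ∪ Sum.inr '' U}) :
    T1Space (κ.ord.ToType ⊕ ℕ) ∧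
      ∀ D : Set (κ.ord.ToType ⊕ ℕ), Dense D → #D < κ →
        ∃ C ⊆ D, C.Countable ∧ Dense C := by
  set B : Set (Set (κ.ord.ToType ⊕ ℕ)) :=
    {s | ∃ V ∈ 𝒱, ∃ U ∈ 𝒰, s = Sum.inl '' V ∪ Sum.inr '' U} with hB
  have key : ∀ (V₁ V₂ : Set κ.ord.ToType) (U₁ U₂ : Set ℕ),
      (Sum.inl '' V₁ ∪ Sum.inr '' U₁) ∩ (Sum.inl '' V₂ ∪ Sum.inr '' U₂)
        = Sum.inl '' (V₁ ∩ V₂) ∪ Sum.inr '' (U₁ ∩ U₂) := by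
    intro V₁ V₂ U₁ U₂
    ext x; cases x <;> simp
  have hunivB : (univ : Set (κ.ord.ToType ⊕ ℕ)) ∈ B := by
    refine ⟨univ, Filter.univ_mem, univ, Filter.univ_mem, ?_⟩
    ext x; cases x <;> simp
  have hbasis : IsTopologicalBasis B := by
    refine ⟨?_, ?_, ht⟩
    · rintro t₁ ⟨V₁, hV₁, U₁, hU₁, rfl⟩ t₂ ⟨V₂, hV₂, U₂, hU₂, rfl⟩ x hx
      refine ⟨_, ⟨V₁ ∩ V₂, Filter.inter_mem hV₁ hV₂, U₁ ∩ U₂, Filter.inter_mem hU₁ hU₂, rfl⟩, ?_, ?_⟩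
      · rw [← key]; exact hx
      · rw [← key]
    · apply subset_antisymm (subset_univ _)
      intro x _
      exact ⟨univ, hunivB, mem_univ x⟩
  have hne : ∀ s ∈ B, s.Nonempty := by
    rintro s ⟨V, hV, U, hU, rfl⟩
    obtain ⟨v, hv⟩ := Ultrafilter.nonempty_of_mem hV
    exact ⟨Sum.inl v, Or.inl ⟨v, hv, rfl⟩⟩
  have hVcompl : ∀ b : κ.ord.ToType, ({b}ᶜ : Set κ.ord.ToType) ∈ 𝒱 := by
    intro b
    apply h𝒱
    rw [compl_compl]
    simpa using lt_trans one_lt_aleph0 hκ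
  have hUcompl : ∀ n : ℕ, ({n}ᶜ : Set ℕ) ∈ 𝒰 := by
    intro n
    apply h𝒰
    rw [Filter.mem_cofinite, compl_compl]
    exact Set.finite_singleton n
  constructor
  · rw [t1Space_iff_exists_open]
    intro x y hxy
    cases x with
    | inl a =>
      cases y with
      | inl b =>
        refine ⟨Sum.inl '' ({b}ᶜ) ∪ Sum.inr '' univ,
          hbasis.isOpen ⟨{b}ᶜ, hVcompl b, univ, Filter.univ_mem, rfl⟩, ?_, ?_⟩
        · exact Or.inl ⟨a, by simpa using fun h => hxy (by rw [h]), rfl⟩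
        · rintro (⟨c, hc, hcb⟩ | ⟨n, _, hn⟩)
          · exact hc (by simpa using (Sum.inl.inj hcb))
          · exact Sum.inr_ne_inl hn
      | inr n =>
        refine ⟨Sum.inl '' univ ∪ Sum.inr '' ({n}ᶜ),
          hbasis.isOpen ⟨univ, Filter.univ_mem, {n}ᶜ, hUcompl n, rfl⟩, ?_, ?_⟩
        · exact Or.inl ⟨a, mem_univ a, rfl⟩
        · rintro (⟨c, _, hc⟩ | ⟨m, hm, hmn⟩)
          · exact Sum.inl_ne_inr hc
          · exact hm (by simpa using (Sum.inr.inj hmn))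
    | inr m =>
      cases y with
      | inl b =>
        refine ⟨Sum.inl '' ({b}ᶜ) ∪ Sum.inr '' univ,
          hbasis.isOpen ⟨{b}ᶜ, hVcompl b, univ, Filter.univ_mem, rfl⟩, ?_, ?_⟩
        · exact Or.inr ⟨m, mem_univ m, rfl⟩
        · rintro (⟨c, hc, hcb⟩ | ⟨n, _, hn⟩)
          · exact hc (by simpa using (Sum.inl.inj hcb))
          · exact Sum.inr_ne_inl hn
      | inr n =>
        refine ⟨Sum.inl '' univ ∪ Sum.inr '' ({n}ᶜ),
          hbasis.isOpen ⟨univ, Filter.univ_mem, {n}ᶜ, hUcompl n, rfl⟩, ?_, ?_⟩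
        · exact Or.inr ⟨m, by simpa using fun h => hxy (by rw [h]), rfl⟩
        · rintro (⟨c, _, hc⟩ | ⟨k, hk, hkn⟩)
          · exact Sum.inl_ne_inr hc
          · exact hk (by simpa using (Sum.inr.inj hkn))
  · intro D hD hDcard
    refine ⟨D ∩ range Sum.inr, inter_subset_left, ?_, ?_⟩
    · exact (countable_range Sum.inr).mono inter_subset_right
    · rw [hbasis.dense_iff]
      rintro o ⟨V, hV, U, hU, rfl⟩ -
      -- it suffices that D meets Sum.inr '' U
      by_contra hcon
      rw [Set.not_nonempty_iff_eq_empty, Set.eq_empty_iff_forall_notMem] at hcon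
      have hmiss : ∀ u ∈ U, Sum.inr u ∉ D := by
        intro u hu hmem
        exact hcon (Sum.inr u) ⟨Or.inr ⟨u, hu, rfl⟩, hmem, ⟨u, rfl⟩⟩
      set A : Set κ.ord.ToType := Sum.inl ⁻¹' D with hA
      have hAcard : #A < κ :=
        lt_of_le_of_lt (mk_preimage_of_injective _ _ Sum.inl_injective) hDcard
      have hAc : Aᶜ ∈ 𝒱 := h𝒱 Aᶜ (by rwa [compl_compl])
      have hoB : (Sum.inl '' Aᶜ ∪ Sum.inr '' U) ∈ B := ⟨Aᶜ, hAc, U, hU, rfl⟩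
      obtain ⟨p, hpo, hpD⟩ := (hbasis.dense_iff.mp hD) _ hoB (hne _ hoB)
      rcases hpo with ⟨v, hv, rfl⟩ | ⟨u, hu, rfl⟩
      · exact hv hpD
      · exact hmiss u hu hpD
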